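/- Let M be a finite-dimensional subspace of the dual space V' with dim W ≥ dim M. Then there exists a linear transformation T : V → W whose adjoint T' : W' → V' has range exactly M. -/

import Mathlib

universe u

variable {D V W : Type u} [DivisionRing D]
  [AddCommGroup V] [Module D V] [AddCommGroup W] [Module D W]

/-- The adjoint (algebraic transpose) of a linear map, as a linear map between
the (right, i.e. `Dᵐᵒᵖ`-) dual spaces. -/
def adjoint (T : V →ₗ[D] W) : (W →ₗ[D] D) →ₗ[Dᵐᵒᵖ] (V →ₗ[D] D) where
  toFun f := f.comp T
  map_add' f g := by ext x; simp
  map_smul' c f := by ext x; simp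

/-- The annihilator of a subspace `K ⊆ V` inside the dual space `V' = V →ₗ[D] D`. -/
def annih (K : Submodule D V) : Submodule Dᵐᵒᵖ (V →ₗ[D] D) where
  carrier := {f | ∀ x ∈ K, f x = 0}
  add_mem' := by intro f g hf hg x hx; simp [hf x hx, hg x hx]
  zero_mem' := by intro x hx; rfl
  smul_mem' := by intro c f hf x hx; simp [hf x hx]

theorem stmt_15 (M : Submodule Dᵐᵒᵖ (V →ₗ[D] D)) [FiniteDimensional Dᵐᵒᵖ M]
    (hdim : Module.rank Dᵐᵒᵖ M ≤ Module.rank D W) :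
    ∃ T : V →ₗ[D] W, LinearMap.range (adjoint (D := D) T) = M := by
  classical
  let b : Module.Basis (Module.Basis.ofVectorSpaceIndex Dᵐᵒᵖ M) Dᵐᵒᵖ M := Module.Basis.ofVectorSpace Dᵐᵒᵖ M
  haveI : Fintype (Module.Basis.ofVectorSpaceIndex Dᵐᵒᵖ M) :=
    FiniteDimensional.fintypeBasisIndex (K := Dᵐᵒᵖ) (V := M) b
  let bW := Module.Basis.ofVectorSpace D W
  have hcard : Cardinal.lift.{u} (Cardinal.mk (Module.Basis.ofVectorSpaceIndex Dᵐᵒᵖ M)) ≤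
      Cardinal.lift.{u} (Cardinal.mk (Module.Basis.ofVectorSpaceIndex D W)) := by
    have h1 := Module.Basis.mk_eq_rank'' (R := Dᵐᵒᵖ) (M := M) b
    have h2 := bW.mk_eq_rank''
    rw [h1, h2]
    exact Cardinal.lift_le.mpr hdim
  obtain ⟨e⟩ := Cardinal.lift_mk_le'.mp hcard
  let w : Module.Basis.ofVectorSpaceIndex Dᵐᵒᵖ M → W := fun i => bW (e i)
  let f : Module.Basis.ofVectorSpaceIndex Dᵐᵒᵖ M → (V →ₗ[D] D) := fun i => (b i : V →ₗ[D] D)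
  let T : V →ₗ[D] W := ∑ i, LinearMap.smulRight (f i) (w i)
  have key : ∀ g : W →ₗ[D] D,
      adjoint (D := D) T g = ∑ i, (MulOpposite.op (g (w i))) • f i := by
    intro g
    ext v
    simp [adjoint, T, LinearMap.sum_apply, map_sum]
  refine ⟨T, le_antisymm ?_ ?_⟩
  · rintro _ ⟨g, rfl⟩
    rw [key]
    exact Submodule.sum_mem _ fun i _ => Submodule.smul_mem _ _ (b i).2
  · intro m hm
    set c : Module.Basis.ofVectorSpaceIndex Dᵐᵒᵖ M → Dᵐᵒᵖ := fun i => b.repr ⟨m, hm⟩ i with hc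
    let g : W →ₗ[D] D := ∑ i, c i • bW.coord (e i)
    have hgw : ∀ j, g (w j) = (c j).unop := by
      intro j
      simp only [g, LinearMap.sum_apply, LinearMap.smul_apply]
      rw [Finset.sum_eq_single j]
      · simp [w, Module.Basis.coord_apply, Module.Basis.repr_self]
      · intro i _ hij
        simp only [w, Module.Basis.coord_apply, Module.Basis.repr_self]
        rw [Finsupp.single_eq_of_ne (e.injective.ne hij)]
        simp
      · simp
    refine ⟨g, ?_⟩
    rw [key]
    have h1 : (⟨m, hm⟩ : M) = ∑ i, c i • b i := (b.sum_repr ⟨m, hm⟩).symm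
    have hm2 : m = ∑ i, c i • (b i : V →ₗ[D] D) := by
      have := congrArg (Subtype.val) h1
      simpa using this
    rw [hm2]
    congr 1
    ext i
    rw [hgw]
    simp [f]
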